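/- Let $n$ be odd, let $v_1,\ldots,v_n$ be nonzero vectors in $\mathbb{R}^d$ with $\|v_i\|_2 \le 1$, and let $\varepsilon_1,\ldots,\varepsilon_n$ be independent Rademacher variables. Then $\mathbb{P}(v_1\varepsilon_1 + \cdots + v_n\varepsilon_n = 0) \le \mathbb{P}(\tfrac12 R_{n-1} + \varepsilon_n = 0)$, where $R_{n-1} = \varepsilon_1 + \cdots + \varepsilon_{n-1}$. -/

import Mathlib

open MeasureTheory ProbabilityTheory Finset
open scoped FinsetFamily symmDiff Classical RealInnerProductSpace

/-- A Rademacher random variable takes values `1` and `-1` each with probability `1/2`. -/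
def IsRademacher {Ω : Type*} [MeasurableSpace Ω] (μ : Measure Ω) (f : Ω → ℝ) : Prop :=
  μ {ω | f ω = 1} = 1 / 2 ∧ μ {ω | f ω = -1} = 1 / 2

-- push-up lemma: an intersecting antichain with all sizes ≤ m (2m < N) has size ≤ C(N-1, m-1)
lemma LO_pushup {N m : ℕ} (hmN : 2 * m < N) :
    ∀ k (𝒜 : Finset (Finset (Fin N))),
      IsAntichain (· ⊆ ·) (𝒜 : Set (Finset (Fin N))) →
      (𝒜 : Set (Finset (Fin N))).Intersecting →
      (∀ A ∈ 𝒜, #A ≤ m) → (∀ A ∈ 𝒜, m - #A ≤ k) →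
      #𝒜 ≤ (N - 1).choose (m - 1) := by
  intro k
  induction k with
  | zero =>
    intro 𝒜 hanti hint hsize hk
    have hsized : (𝒜 : Set (Finset (Fin N))).Sized m := by
      intro A hA
      have h1 := hsize A hA
      have h2 := hk A hA
      omega
    exact Finset.erdos_ko_rado hint hsized (by omega)
  | succ k ih =>
    intro 𝒜 hanti hint hsize hk
    by_cases hL : ∀ A ∈ 𝒜, m - #A ≤ k
    · exact ih 𝒜 hanti hint hsize hL
    push_neg at hL
    obtain ⟨A₀, hA₀, hA₀k⟩ := hL
    have hk1m : k + 1 ≤ m := by have := hsize A₀ hA₀; omega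
    set j := m - (k + 1) with hj
    have hjm : j + (k + 1) = m := by omega
    -- all sets have size ≥ j
    have hge : ∀ A ∈ 𝒜, j ≤ #A := by
      intro A hA
      have := hk A hA
      omega
    classical
    set L : Finset (Finset (Fin N)) := 𝒜.filter (fun A => #A = j) with hLdef
    have hLsub : L ⊆ 𝒜 := filter_subset _ _
    have hLsized : (L : Set (Finset (Fin N))).Sized j := by
      intro A hA
      simp only [hLdef, coe_filter, Set.mem_setOf_eq] at hA
      exact hA.2
    set 𝒜' : Finset (Finset (Fin N)) := (𝒜 \ L) ∪ ∂⁺ L with h𝒜'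
    have hshadow_sized : ((∂⁺ L : Finset (Finset (Fin N))) : Set (Finset (Fin N))).Sized (j + 1) :=
      hLsized.upShadow
    have hdiffcard : ∀ B ∈ 𝒜 \ L, j + 1 ≤ #B := by
      intro B hB
      rw [mem_sdiff] at hB
      have h1 := hge B hB.1
      have h2 : #B ≠ j := by
        intro h
        exact hB.2 (mem_filter.2 ⟨hB.1, h⟩)
      omega
    have hsup : ∀ C ∈ ∂⁺ L, ∃ A ∈ 𝒜, A ⊆ C ∧ #A = j := by
      intro C hC
      obtain ⟨A, hA, hAC⟩ := Finset.exists_subset_of_mem_upShadow hC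
      exact ⟨A, hLsub hA, hAC, hLsized hA⟩
    -- disjointness
    have hdisj : Disjoint (𝒜 \ L) (∂⁺ L) := by
      rw [Finset.disjoint_left]
      intro C hC hC'
      obtain ⟨A, hA, hAC, hAcard⟩ := hsup C hC'
      have hCcard := hshadow_sized hC'
      have hne : A ≠ C := by
        intro h; rw [h] at hAcard; omega
      exact hanti hA ((mem_sdiff.1 hC).1) hne hAC
    -- antichain of 𝒜'
    have hanti' : IsAntichain (· ⊆ ·) (𝒜' : Set (Finset (Fin N))) := by
      intro x hx y hy hxy hsub
      rw [h𝒜', coe_union, Set.mem_union] at hx hy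
      rcases hx with hx | hx <;> rcases hy with hy | hy
      · exact hanti ((sdiff_subset : 𝒜 \ L ⊆ 𝒜) hx) ((sdiff_subset : 𝒜 \ L ⊆ 𝒜) hy) hxy hsub
      · -- x old, y new : y ⊇ A ∈ L, x ⊇ ... x ⊆ y
        obtain ⟨A, hA, hAy, hAcard⟩ := hsup y hy
        have hycard := hshadow_sized hy
        have hxcard := hdiffcard x hx
        have : x = y := Finset.eq_of_subset_of_card_le hsub (by omega)
        exact hxy this
      · -- x new, y old, x ⊆ y : then A ⊆ x ⊆ y, A, y ∈ 𝒜
        obtain ⟨A, hA, hAx, hAcard⟩ := hsup x hx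
        have hxcard := hshadow_sized hx
        have hycard := hdiffcard y hy
        have hne : A ≠ y := by
          intro h; rw [h] at hAcard; omega
        exact hanti hA ((sdiff_subset : 𝒜 \ L ⊆ 𝒜) hy) hne (hAx.trans hsub)
      · -- both new: same size
        have hxcard := hshadow_sized hx
        have hycard := hshadow_sized hy
        exact hxy (Finset.eq_of_subset_of_card_le hsub (by omega))
    -- intersecting
    have hcontain : ∀ x ∈ 𝒜', ∃ A ∈ 𝒜, A ⊆ x := by
      intro x hx
      rw [h𝒜', mem_union] at hx
      rcases hx with hx | hx
      · exact ⟨x, (mem_sdiff.1 hx).1, subset_rfl⟩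
      · obtain ⟨A, hA, hAx, _⟩ := hsup x hx
        exact ⟨A, hA, hAx⟩
    have hint' : (𝒜' : Set (Finset (Fin N))).Intersecting := by
      intro x hx y hy hdxy
      obtain ⟨A, hA, hAx⟩ := hcontain x hx
      obtain ⟨B, hB, hBy⟩ := hcontain y hy
      exact hint hA hB (hdxy.mono hAx hBy)
    -- sizes
    have hsize' : ∀ A ∈ 𝒜', #A ≤ m := by
      intro A hA
      rw [h𝒜', mem_union] at hA
      rcases hA with hA | hA
      · exact hsize A ((mem_sdiff.1 hA).1)
      · rw [hshadow_sized hA]; omega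
    have hk' : ∀ A ∈ 𝒜', m - #A ≤ k := by
      intro A hA
      rw [h𝒜', mem_union] at hA
      rcases hA with hA | hA
      · have := hdiffcard A hA; omega
      · rw [hshadow_sized hA]; omega
    -- cardinality: #L ≤ #(∂⁺ L)
    have hLshadow : #L ≤ #(∂⁺ L) := by
      by_cases hLem : L = ∅
      · simp [hLem]
      have hcompls : ((Lᶜˢ : Finset (Finset (Fin N))) : Set (Finset (Fin N))).Sized (N - j) := by
        simpa using hLsized.compls
      have hlym := Finset.card_mul_le_card_shadow_mul hcompls
      rw [Finset.shadow_compls, Finset.card_compls, Finset.card_compls] at hlym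
      have hNj : Fintype.card (Fin N) - (N - j) + 1 = j + 1 := by
        rw [Fintype.card_fin]; omega
      rw [hNj] at hlym
      have h1 : #L * (j + 1) ≤ #L * (N - j) :=
        Nat.mul_le_mul_left _ (by omega)
      have := h1.trans hlym
      exact Nat.le_of_mul_le_mul_right this (by omega)
    have hcard : #𝒜 ≤ #𝒜' := by
      rw [h𝒜', card_union_of_disjoint hdisj, card_sdiff_of_subset hLsub]
      have hL𝒜 : #L ≤ #𝒜 := card_le_card hLsub
      omega
    exact hcard.trans (ih 𝒜' hanti' hint' hsize' hk')

lemma LO_symm_antichain {m : ℕ} (S : Finset (Finset (Fin (2 * m + 1))))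
    (hanti : IsAntichain (· ⊆ ·) (S : Set (Finset (Fin (2 * m + 1)))))
    (hcompl : ∀ A ∈ S, Aᶜ ∈ S) :
    #S ≤ 2 * (2 * m).choose (m + 1) := by
  classical
  set S₁ := S.filter (fun A => #A ≤ m) with hS₁
  have hcards : ∀ A : Finset (Fin (2 * m + 1)), #Aᶜ = 2 * m + 1 - #A := by
    intro A
    rw [Finset.card_compl, Fintype.card_fin]
  -- S₂ injects into S₁ via complement
  have hsplit : #S ≤ 2 * #S₁ := by
    have h2 : #(S.filter (fun A => ¬ #A ≤ m)) ≤ #S₁ := by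
      apply Finset.card_le_card_of_injOn (fun A => Aᶜ)
      · intro A hA
        rw [mem_coe] at hA ⊢
        rw [mem_filter] at hA ⊢
        refine ⟨hcompl A hA.1, ?_⟩
        rw [hcards]
        have hle : #A ≤ 2 * m + 1 := by
          have := Finset.card_le_univ A
          simpa using this
        omega
      · intro A _ B _ h
        exact compl_injective h
    have h3 := Finset.card_filter_add_card_filter_not (s := S) (p := fun A => #A ≤ m)
    have h4 : #S₁ = #(S.filter (fun A => #A ≤ m)) := rfl
    omega
  -- S₁ is intersecting
  have hint : (S₁ : Set (Finset (Fin (2 * m + 1)))).Intersecting := by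
    intro A hA B hB hAB
    simp only [hS₁, coe_filter, Set.mem_setOf_eq] at hA hB
    have hsub : A ⊆ Bᶜ := by
      intro x hx
      rw [Finset.mem_compl]
      exact fun hxB => (Finset.disjoint_left.1 hAB hx) hxB
    have hne : A ≠ Bᶜ := by
      intro h
      have := hcards B
      have h1 : #A ≤ m := hA.2
      have h2 : #B ≤ m := hB.2
      rw [h] at h1
      omega
    exact hanti hA.1 (hcompl B hB.1) hne hsub
  have hanti₁ : IsAntichain (· ⊆ ·) (S₁ : Set (Finset (Fin (2 * m + 1)))) :=
    hanti.subset (Finset.coe_subset.2 (Finset.filter_subset _ _))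
  have hsize₁ : ∀ A ∈ S₁, #A ≤ m := fun A hA => (mem_filter.1 hA).2
  rcases Nat.eq_zero_or_pos m with hm | hm
  · -- m = 0 : S₁ is empty
    subst hm
    have : S₁ = ∅ := by
      rw [Finset.eq_empty_iff_forall_notMem]
      intro A hA
      have h0 : #A = 0 := Nat.le_zero.1 (hsize₁ A hA)
      have : A = ⊥ := Finset.card_eq_zero.1 h0
      exact hint.bot_notMem (this ▸ (mem_coe.2 hA))
    simp [this] at hsplit
    simp [hsplit]
  · have hpush := LO_pushup (N := 2 * m + 1) (m := m) (by omega) m S₁ hanti₁ hint hsize₁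
      (fun A _ => Nat.sub_le _ _)
    have hchoose : (2 * m + 1 - 1).choose (m - 1) = (2 * m).choose (m + 1) := by
      have h1 : 2 * m + 1 - 1 = 2 * m := by omega
      rw [h1]
      have := Nat.choose_symm (n := 2 * m) (k := m + 1) (by omega)
      have h2 : 2 * m - (m + 1) = m - 1 := by omega
      rw [h2] at this
      omega
    rw [hchoose] at hpush
    omega

noncomputable def LOsg {N : ℕ} (t : Finset (Fin N)) (j : Fin N) : ℝ :=
  if j ∈ t then 1 else -1

lemma LOsg_compl {N : ℕ} (t : Finset (Fin N)) (j : Fin N) : LOsg tᶜ j = - LOsg t j := by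
  by_cases h : j ∈ t <;> simp [LOsg, h]

-- positive-weight case: the solution family is a complement-closed antichain
lemma LO_card_pos_weights {m : ℕ} (b : Fin (2 * m + 1) → ℝ) (hb : ∀ j, 0 < b j) :
    #(univ.filter (fun t : Finset (Fin (2 * m + 1)) => ∑ j, LOsg t j * b j = 0))
      ≤ 2 * (2 * m).choose (m + 1) := by
  classical
  set S := univ.filter (fun t : Finset (Fin (2 * m + 1)) => ∑ j, LOsg t j * b j = 0) with hS
  have hmem : ∀ t, t ∈ S ↔ ∑ j, LOsg t j * b j = 0 := by
    intro t; simp [hS]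
  apply LO_symm_antichain
  · -- antichain
    intro x hx y hy hxy hsub
    rw [mem_coe, hmem] at hx hy
    have hdiff : ∑ j, (LOsg y j - LOsg x j) * b j = 0 := by
      simp only [sub_mul]
      rw [Finset.sum_sub_distrib, hy, hx, sub_zero]
    have hnonneg : ∀ j ∈ (univ : Finset (Fin (2 * m + 1))), 0 ≤ (LOsg y j - LOsg x j) * b j := by
      intro j _
      by_cases hjx : j ∈ x
      · have hjy : j ∈ y := hsub hjx
        simp [LOsg, hjx, hjy]
      · by_cases hjy : j ∈ y
        · simp only [LOsg, hjx, hjy, if_true, if_false]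
          have := (hb j).le
          nlinarith
        · simp [LOsg, hjx, hjy]
    have hall := (Finset.sum_eq_zero_iff_of_nonneg hnonneg).1 hdiff
    apply hxy
    apply Finset.Subset.antisymm hsub
    intro j hjy
    by_contra hjx
    have := hall j (mem_univ j)
    simp only [LOsg, hjy, hjx, if_true, if_false] at this
    have hbj := hb j
    nlinarith
  · -- complement-closed
    intro A hA
    rw [hmem] at hA ⊢
    simp only [LOsg_compl, neg_mul]
    rw [Finset.sum_neg_distrib, hA, neg_zero]

lemma LO_card_S_le {d m : ℕ} (v : ℕ → EuclideanSpace ℝ (Fin d))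
    (hv0 : ∀ i < 2 * m + 1, v i ≠ 0) :
    #(univ.filter (fun t : Finset (Fin (2 * m + 1)) =>
        ∑ j : Fin (2 * m + 1), LOsg t j • v j.val = 0))
      ≤ 2 * (2 * m).choose (m + 1) := by
  classical
  -- find u not orthogonal to any v j
  obtain ⟨u, hu⟩ : ∃ u : EuclideanSpace ℝ (Fin d),
      ∀ j : Fin (2 * m + 1), ⟪v j.val, u⟫ ≠ 0 := by
    have hcover := Subspace.biUnion_ne_univ_of_top_notMem
      (k := ℝ) (E := EuclideanSpace ℝ (Fin d))
      (s := (univ : Finset (Fin (2 * m + 1))).image (fun j => (ℝ ∙ v j.val)ᗮ))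
      (by
        simp only [Finset.mem_image, mem_univ, true_and, not_exists]
        intro j h
        have hvj : v j.val ≠ 0 := hv0 j.val j.isLt
        rw [Submodule.orthogonal_eq_top_iff, Submodule.span_singleton_eq_bot] at h
        exact hvj h)
    rw [Set.ne_univ_iff_exists_notMem] at hcover
    obtain ⟨u, hu⟩ := hcover
    refine ⟨u, fun j hj => hu ?_⟩
    simp only [Set.mem_iUnion]
    exact ⟨(ℝ ∙ v j.val)ᗮ, ⟨Finset.mem_image_of_mem _ (mem_univ j),
      Submodule.mem_orthogonal_singleton_iff_inner_right.2 hj⟩⟩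
  set a : Fin (2 * m + 1) → ℝ := fun j => ⟪v j.val, u⟫ with ha
  set b : Fin (2 * m + 1) → ℝ := fun j => |a j| with hbdef
  have hb : ∀ j, 0 < b j := fun j => abs_pos.2 (hu j)
  set T : Finset (Fin (2 * m + 1)) := univ.filter (fun j => a j < 0) with hT
  refine le_trans ?_ (LO_card_pos_weights b hb)
  apply Finset.card_le_card_of_injOn (fun t => t ∆ T)
  · intro t ht
    simp only [mem_coe, mem_filter, mem_univ, true_and] at ht ⊢
    have hinner : ∑ j, LOsg t j * a j = 0 := by
      have h0 : ⟪∑ j : Fin (2 * m + 1), LOsg t j • v j.val, u⟫ = (0 : ℝ) := by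
        rw [ht, inner_zero_left]
      rw [sum_inner] at h0
      simp only [ha]
      simpa only [real_inner_smul_left] using h0
    rw [← hinner]
    apply Finset.sum_congr rfl
    intro j _
    by_cases hjT : j ∈ T
    · have haj : a j < 0 := by simpa [hT] using hjT
      have h1 : LOsg (t ∆ T) j = - LOsg t j := by
        by_cases hjt : j ∈ t <;>
          simp [LOsg, Finset.mem_symmDiff, hjt, hjT]
      rw [h1, hbdef]
      simp only
      rw [abs_of_neg haj]
      ring
    · have haj : 0 ≤ a j := by
        by_contra h
        exact hjT (by simp [hT]; linarith)
      have h1 : LOsg (t ∆ T) j = LOsg t j := by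
        by_cases hjt : j ∈ t <;>
          simp [LOsg, Finset.mem_symmDiff, hjt, hjT]
      rw [h1, hbdef]
      simp only
      rw [abs_of_nonneg haj]
  · intro s _ t _ h
    have := congrArg (fun x => x ∆ T) h
    simpa [symmDiff_symmDiff_cancel_right] using this

noncomputable def LOsgn {N : ℕ} (t : Finset (Fin N)) (i : ℕ) : ℝ :=
  if i ∈ t.image Fin.val then 1 else -1

lemma LOsgn_val {N : ℕ} (t : Finset (Fin N)) (j : Fin N) : LOsgn t (j : ℕ) = LOsg t j := by
  unfold LOsgn LOsg
  congr 1
  simp only [mem_image, eq_iff_iff]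
  constructor
  · rintro ⟨a, ha, hav⟩
    rwa [Fin.val_injective hav] at ha
  · intro h; exact ⟨j, h, rfl⟩

lemma LOsgn_cases {N : ℕ} (t : Finset (Fin N)) (i : ℕ) : LOsgn t i = 1 ∨ LOsgn t i = -1 := by
  unfold LOsgn; split <;> simp

lemma LO_sum_pm (s : Finset ℕ) (p : ℕ → Prop) [DecidablePred p] :
    ∑ i ∈ s, (if p i then (1 : ℝ) else -1) = 2 * #(s.filter p) - #s := by
  have h : ∀ i ∈ s, (if p i then (1 : ℝ) else -1)
      = 2 * (if p i then (1 : ℝ) else 0) - 1 := by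
    intro i _; split <;> norm_num
  rw [Finset.sum_congr rfl h, Finset.sum_sub_distrib, ← Finset.mul_sum, Finset.sum_boole,
    Finset.sum_const, nsmul_eq_mul, mul_one]

lemma LO_filter_eq {m : ℕ} (t : Finset (Fin (2 * m + 1))) :
    (Finset.range (2 * m)).filter (fun i => i ∈ t.image Fin.val)
      = (t.erase (Fin.last (2 * m))).image Fin.val := by
  ext i
  simp only [mem_filter, mem_range, mem_image, mem_erase]
  constructor
  · rintro ⟨hi, j, hj, rfl⟩
    refine ⟨j, ⟨?_, hj⟩, rfl⟩
    intro h
    rw [h] at hi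
    simp [Fin.last] at hi
  · rintro ⟨j, ⟨hne, hj⟩, rfl⟩
    refine ⟨?_, j, hj, rfl⟩
    have h1 : (j : ℕ) < 2 * m + 1 := j.isLt
    have h2 : (j : ℕ) ≠ 2 * m := by
      intro h
      apply hne
      apply Fin.ext
      simpa [Fin.last] using h
    omega

lemma LO_sum_range {m : ℕ} (t : Finset (Fin (2 * m + 1))) :
    ∑ i ∈ Finset.range (2 * m), LOsgn t i
      = 2 * (#(t.erase (Fin.last (2 * m))) : ℝ) - 2 * m := by
  unfold LOsgn
  rw [LO_sum_pm, LO_filter_eq, Finset.card_image_of_injective _ Fin.val_injective,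
    Finset.card_range]
  push_cast
  ring

section Prob

variable {Ω : Type*} [MeasurableSpace Ω] (μ : Measure Ω) [IsProbabilityMeasure μ]
  (ε : ℕ → Ω → ℝ)

noncomputable def LOatom {N : ℕ} (t : Finset (Fin N)) : Set Ω :=
  ⋂ i ∈ Finset.range N, ε i ⁻¹' {LOsgn t i}

lemma LOatom_measurable {N : ℕ} (hmeas : ∀ i, Measurable (ε i)) (t : Finset (Fin N)) :
    MeasurableSet (LOatom ε t) :=
  MeasurableSet.biInter (Set.to_countable _)
    (fun i _ => (hmeas i) (measurableSet_singleton _))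

lemma LOatom_measure {N : ℕ}
    (hindep : iIndepFun ε μ)
    (hrad : ∀ i, IsRademacher μ (ε i)) (t : Finset (Fin N)) :
    μ (LOatom ε t) = (1 / 2) ^ N := by
  unfold LOatom
  rw [hindep.measure_inter_preimage_eq_mul (Finset.range N)
    (sets := fun i => {LOsgn t i}) (fun i _ => measurableSet_singleton _)]
  rw [Finset.prod_congr rfl (g := fun _ => (1 / 2 : ENNReal)) (fun i _ => ?_),
    Finset.prod_const, Finset.card_range]
  rcases LOsgn_cases t i with h | h <;> rw [h]
  · exact (hrad i).1
  · exact (hrad i).2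

lemma LOatom_disjoint {N : ℕ} {t t' : Finset (Fin N)} (h : t ≠ t') :
    Disjoint (LOatom ε t) (LOatom ε t') := by
  have hne : ∃ j : Fin N, (j ∈ t ∧ j ∉ t') ∨ (j ∈ t' ∧ j ∉ t) := by
    by_contra hc
    push_neg at hc
    apply h
    ext j
    have := hc j
    tauto
  obtain ⟨j, hj⟩ := hne
  rw [Set.disjoint_left]
  intro ω hω hω'
  have h1 : ε (j : ℕ) ω = LOsgn t (j : ℕ) := by
    have := Set.mem_iInter₂.1 hω (j : ℕ) (Finset.mem_range.2 j.isLt)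
    simpa using this
  have h2 : ε (j : ℕ) ω = LOsgn t' (j : ℕ) := by
    have := Set.mem_iInter₂.1 hω' (j : ℕ) (Finset.mem_range.2 j.isLt)
    simpa using this
  rw [LOsgn_val] at h1 h2
  rcases hj with ⟨ha, hb⟩ | ⟨ha, hb⟩ <;>
  · rw [h1] at h2
    unfold LOsg at h2
    simp [ha, hb] at h2
    norm_num at h2

end Prob

theorem littlewood_offord_zero_case_odd
    {Ω : Type*} [MeasurableSpace Ω] (μ : Measure Ω) [IsProbabilityMeasure μ]
    (d n : ℕ) (hn : Odd n) (v : ℕ → EuclideanSpace ℝ (Fin d))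
    (hv0 : ∀ i < n, v i ≠ 0) (hv1 : ∀ i < n, ‖v i‖ ≤ 1)
    (ε : ℕ → Ω → ℝ) (hmeas : ∀ i, Measurable (ε i))
    (hindep : iIndepFun ε μ)
    (hrad : ∀ i, IsRademacher μ (ε i)) :
    μ {ω | ∑ i ∈ Finset.range n, ε i ω • v i = 0}
      ≤ μ {ω | (1 / 2) * ∑ i ∈ Finset.range (n - 1), ε i ω + ε (n - 1) ω = 0} := by
  obtain ⟨m, rfl⟩ : ∃ m, n = 2 * m + 1 := by
    obtain ⟨m, hm⟩ := hn; exact ⟨m, by omega⟩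
  set N := 2 * m + 1 with hN
  have hN1 : N - 1 = 2 * m := by omega
  set E : Set Ω := {ω | ∑ i ∈ Finset.range N, ε i ω • v i = 0} with hE
  set F : Set Ω := {ω | (1 / 2) * ∑ i ∈ Finset.range (N - 1), ε i ω + ε (N - 1) ω = 0} with hF
  set L : Fin N := Fin.last (2 * m) with hL
  have hLval : (L : ℕ) = 2 * m := rfl
  -- the families
  set 𝒮 : Finset (Finset (Fin N)) := univ.filter (fun t : Finset (Fin N) =>
      ∑ j : Fin N, LOsg t j • v j.val = 0) with h𝒮
  set P₂ : Finset (Finset (Fin N)) := Finset.powersetCard (m + 1) (univ.erase L) with hP₂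
  set 𝒰 : Finset (Finset (Fin N)) := P₂.image compl ∪ P₂ with h𝒰
  -- the good event
  set G : Set Ω := ⋂ i ∈ Finset.range N, ε i ⁻¹' {1, -1} with hG
  have hGc : μ Gᶜ = 0 := by
    rw [hG, Set.compl_iInter₂]
    refine le_antisymm (le_trans (measure_biUnion_finset_le _ _) ?_) (by positivity)
    rw [Finset.sum_eq_zero (fun i _ => ?_)]
    have hmeas1 : MeasurableSet (ε i ⁻¹' {1, -1}) :=
      (hmeas i) (by measurability)
    have h1 : μ (ε i ⁻¹' {1, -1}) = 1 := by
      have : (({1, -1} : Set ℝ)) = {1} ∪ {-1} := rfl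
      rw [this, Set.preimage_union]
      rw [measure_union ?_ ((hmeas i) (measurableSet_singleton _))]
      · have e1 : ε i ⁻¹' {1} = {ω | ε i ω = 1} := rfl
        have e2 : ε i ⁻¹' {-1} = {ω | ε i ω = -1} := rfl
        rw [e1, e2, (hrad i).1, (hrad i).2, ENNReal.add_halves]
      · rw [Set.disjoint_left]
        intro ω h1 h2
        simp only [Set.mem_preimage, Set.mem_singleton_iff] at h1 h2
        rw [h1] at h2; norm_num at h2
    rw [measure_compl hmeas1 (measure_ne_top μ _), h1, measure_univ, tsub_self]
  -- LHS bound
  have hLHS : μ E ≤ (#𝒮 : ENNReal) * (1 / 2) ^ N := by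
    have hsub : E ∩ G ⊆ ⋃ t ∈ 𝒮, LOatom ε t := by
      intro ω ⟨hωE, hωG⟩
      set t : Finset (Fin N) := univ.filter (fun j : Fin N => ε (j : ℕ) ω = 1) with ht
      have hkey : ∀ i ∈ Finset.range N, ε i ω = LOsgn t i := by
        intro i hi
        rw [Finset.mem_range] at hi
        set j : Fin N := ⟨i, hi⟩ with hj
        have hji : (j : ℕ) = i := rfl
        have hmem : ε i ω ∈ ({1, -1} : Set ℝ) := by
          have := Set.mem_iInter₂.1 hωG i (Finset.mem_range.2 hi)
          simpa using this
        have hiff : j ∈ t ↔ ε i ω = 1 := by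
          rw [ht]; simp [hji]
        rw [← hji, LOsgn_val]
        rcases hmem with h | h
        · rw [h]; unfold LOsg; rw [if_pos (hiff.2 h)]
        · simp only [Set.mem_singleton_iff] at h
          rw [h]; unfold LOsg; rw [if_neg]
          intro hjt
          rw [hiff.1 hjt] at h
          norm_num at h
      have ht𝒮 : t ∈ 𝒮 := by
        rw [h𝒮, mem_filter]
        refine ⟨mem_univ _, ?_⟩
        have h1 : ∑ j : Fin N, LOsg t j • v (j : ℕ)
            = ∑ i ∈ Finset.range N, ε i ω • v i := by
          rw [Finset.sum_range (fun i => ε i ω • v i)]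
          apply Finset.sum_congr rfl
          intro j _
          rw [← LOsgn_val, hkey (j : ℕ) (Finset.mem_range.2 j.isLt)]
        rw [h1]
        exact hωE
      refine Set.mem_biUnion ht𝒮 ?_
      rw [LOatom]
      exact Set.mem_iInter₂.2 (fun i hi => by
        simp only [Set.mem_preimage, Set.mem_singleton_iff]
        exact hkey i hi)
    calc μ E ≤ μ ((E ∩ G) ∪ Gᶜ) := measure_mono (fun ω hω => by
            by_cases hg : ω ∈ G
            · exact Or.inl ⟨hω, hg⟩
            · exact Or.inr hg)
      _ ≤ μ (E ∩ G) + μ Gᶜ := measure_union_le _ _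
      _ = μ (E ∩ G) := by rw [hGc, add_zero]
      _ ≤ μ (⋃ t ∈ 𝒮, LOatom ε t) := measure_mono hsub
      _ ≤ ∑ t ∈ 𝒮, μ (LOatom ε t) := measure_biUnion_finset_le _ _
      _ = (#𝒮 : ENNReal) * (1 / 2) ^ N := by
          rw [Finset.sum_congr rfl (fun t _ => LOatom_measure μ ε hindep hrad t),
            Finset.sum_const, nsmul_eq_mul]
  -- RHS bound
  have hRHS : (#𝒰 : ENNReal) * (1 / 2) ^ N ≤ μ F := by
    have hsub : ∀ t ∈ 𝒰, LOatom ε t ⊆ F := by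
      intro t ht ω hω
      have hkey : ∀ i ∈ Finset.range N, ε i ω = LOsgn t i := by
        intro i hi
        have := Set.mem_iInter₂.1 hω i hi
        simpa using this
      have hsum : ∑ i ∈ Finset.range (N - 1), ε i ω
          = 2 * (#(t.erase L) : ℝ) - 2 * m := by
        rw [hN1, ← LO_sum_range t]
        apply Finset.sum_congr rfl
        intro i hi
        rw [Finset.mem_range] at hi
        exact hkey i (Finset.mem_range.2 (by omega))
      have hlast : ε (N - 1) ω = LOsg t L := by
        rw [hN1, ← LOsgn_val t L, hLval]
        exact hkey (2 * m) (Finset.mem_range.2 (by omega))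
      rw [hF, Set.mem_setOf_eq, hsum, hlast]
      rw [h𝒰, mem_union] at ht
      rcases ht with ht | ht
      · -- t = sᶜ with s ∈ P₂ : L ∈ t, #t = m, m ≥ 1
        rw [mem_image] at ht
        obtain ⟨s, hs, rfl⟩ := ht
        rw [hP₂, Finset.mem_powersetCard] at hs
        obtain ⟨hssub, hscard⟩ := hs
        have hLs : L ∉ s := fun h => (Finset.mem_erase.1 (hssub h)).1 rfl
        have hLsc : L ∈ sᶜ := Finset.mem_compl.2 hLs
        have hm1 : 1 ≤ m := by
          have := Finset.card_le_card hssub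
          rw [hscard, Finset.card_erase_of_mem (mem_univ L), Finset.card_univ,
            Fintype.card_fin] at this
          omega
        have hcardc : #(sᶜ) = m := by
          rw [Finset.card_compl, Fintype.card_fin, hscard]
          omega
        have hcarde : #(sᶜ.erase L) = m - 1 := by
          rw [Finset.card_erase_of_mem hLsc, hcardc]
        rw [hcarde]
        have hsgL : LOsg sᶜ L = 1 := by unfold LOsg; rw [if_pos hLsc]
        rw [hsgL]
        rw [Nat.cast_sub hm1]
        push_cast
        ring
      · -- t ∈ P₂ : L ∉ t, #t = m + 1
        rw [hP₂, Finset.mem_powersetCard] at ht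
        obtain ⟨htsub, htcard⟩ := ht
        have hLt : L ∉ t := fun h => (Finset.mem_erase.1 (htsub h)).1 rfl
        have hcarde : #(t.erase L) = m + 1 := by
          rw [Finset.erase_eq_of_notMem hLt, htcard]
        rw [hcarde]
        have hsgL : LOsg t L = -1 := by unfold LOsg; rw [if_neg hLt]
        rw [hsgL]
        push_cast
        ring
    calc (#𝒰 : ENNReal) * (1 / 2) ^ N
        = ∑ t ∈ 𝒰, μ (LOatom ε t) := by
          rw [Finset.sum_congr rfl (fun t _ => LOatom_measure μ ε hindep hrad t),
            Finset.sum_const, nsmul_eq_mul]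
      _ = μ (⋃ t ∈ 𝒰, LOatom ε t) := by
          rw [measure_biUnion_finset ?_ (fun t _ => LOatom_measurable ε hmeas t)]
          intro t _ t' _ hne
          exact LOatom_disjoint ε hne
      _ ≤ μ F := measure_mono (Set.iUnion₂_subset hsub)
  -- counting
  have hcount : #𝒮 ≤ #𝒰 := by
    have hScard := LO_card_S_le v hv0
    have hdisj : Disjoint (P₂.image compl) P₂ := by
      rw [Finset.disjoint_left]
      intro t ht ht'
      rw [mem_image] at ht
      obtain ⟨s, hs, rfl⟩ := ht
      rw [hP₂, Finset.mem_powersetCard] at hs ht'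
      have hLs : L ∉ s := fun h => (Finset.mem_erase.1 (hs.1 h)).1 rfl
      have := ht'.1 (Finset.mem_compl.2 hLs)
      exact (Finset.mem_erase.1 this).1 rfl
    have hcardU : #𝒰 = 2 * (2 * m).choose (m + 1) := by
      rw [h𝒰, Finset.card_union_of_disjoint hdisj,
        Finset.card_image_of_injective _ compl_injective, hP₂,
        Finset.card_powersetCard, Finset.card_erase_of_mem (mem_univ L),
        Finset.card_univ, Fintype.card_fin]
      have : 2 * m + 1 - 1 = 2 * m := by omega
      rw [this]
      ring
    rw [hcardU]
    exact hScard
  refine hLHS.trans (le_trans ?_ hRHS)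
  exact mul_le_mul_left (Nat.cast_le.2 hcount) _
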